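/- Let c < θ̄ be real numbers and let f : ℝ → ℝ be concave on the interval [c, θ̄] with f(c) = 0 and f(θ̄) ≥ 0. Then f((c + θ̄)/2) ≥ (1/2)·f(p) for every p ∈ [c, θ̄]. -/

import Mathlib

/-- **Per-segment midpoint inequality.**
If `f` is concave on `[c, θ̄]` with `f c = 0` and `f θ̄ ≥ 0`, then the value of
`f` at the midpoint `(c + θ̄)/2` is at least half of `f p` for every
`p ∈ [c, θ̄]`. -/
theorem concave_midpoint_half
    (c θ : ℝ) (h : c < θ) (f : ℝ → ℝ)
    (hconc : ConcaveOn ℝ (Set.Icc c θ) f)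
    (hfc : f c = 0) (hfθ : 0 ≤ f θ) :
    ∀ p ∈ Set.Icc c θ, f ((c + θ) / 2) ≥ (1 / 2) * f p := by
  have hθc : (0:ℝ) < θ - c := by linarith
  -- f is nonneg on [c, θ]
  have hnonneg : ∀ p ∈ Set.Icc c θ, 0 ≤ f p := by
    intro p hp
    obtain ⟨hp1, hp2⟩ := hp
    have ha : (0:ℝ) ≤ (θ - p) / (θ - c) := div_nonneg (by linarith) hθc.le
    have hb : (0:ℝ) ≤ (p - c) / (θ - c) := div_nonneg (by linarith) hθc.le
    have hab : (θ - p) / (θ - c) + (p - c) / (θ - c) = 1 := by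
      rw [← add_div, div_eq_one_iff_eq hθc.ne']; ring
    have key := hconc.2 (Set.left_mem_Icc.2 h.le) (Set.right_mem_Icc.2 h.le) ha hb hab
    have hpt : ((θ - p) / (θ - c)) • c + ((p - c) / (θ - c)) • θ = p := by
      simp only [smul_eq_mul]
      rw [div_mul_eq_mul_div, div_mul_eq_mul_div, ← add_div,
        div_eq_iff hθc.ne']; ring
    rw [hpt] at key
    simp only [smul_eq_mul, hfc, mul_zero, zero_add] at key
    have h2 : 0 ≤ (p - c) / (θ - c) * f θ := mul_nonneg hb hfθ
    linarith
  intro p hp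
  obtain ⟨hp1, hp2⟩ := hp
  have hfp : 0 ≤ f p := hnonneg p ⟨hp1, hp2⟩
  rcases le_or_gt p ((c + θ) / 2) with hle | hgt
  · -- midpoint between p and θ
    have hθp : (0:ℝ) < θ - p := by linarith
    set t := (θ - (c + θ) / 2) / (θ - p) with ht
    have ht2 : (1:ℝ)/2 ≤ t := by
      rw [ht, le_div_iff₀ hθp]; linarith
    have ht1 : t ≤ 1 := by
      rw [ht, div_le_one hθp]; linarith
    have ha : 0 ≤ t := by linarith
    have hb : 0 ≤ 1 - t := by linarith
    have key := hconc.2 ⟨hp1, hp2⟩ (Set.right_mem_Icc.2 h.le) ha hb (by ring)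
    have hpt : t • p + (1 - t) • θ = (c + θ) / 2 := by
      simp only [smul_eq_mul, ht]
      field_simp
      ring
    rw [hpt] at key
    simp only [smul_eq_mul] at key
    nlinarith [mul_nonneg hb hfθ, mul_le_mul_of_nonneg_right ht2 hfp]
  · -- midpoint between c and p
    have hpc : (0:ℝ) < p - c := by linarith
    set s := (p - (c + θ) / 2) / (p - c) with hs
    have hsle : s ≤ 1/2 := by
      rw [hs, div_le_iff₀ hpc]; linarith
    have hs1 : 1 - s ≥ 1/2 := by linarith
    have hs0 : 0 ≤ s := div_nonneg (by linarith) hpc.le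
    have hb : 0 ≤ 1 - s := by linarith
    have key := hconc.2 (Set.left_mem_Icc.2 h.le) ⟨hp1, hp2⟩ hs0 hb (by ring)
    have hpt : s • c + (1 - s) • p = (c + θ) / 2 := by
      simp only [smul_eq_mul, hs]
      field_simp
      ring
    rw [hpt] at key
    simp only [smul_eq_mul, hfc, mul_zero, zero_add] at key
    nlinarith [mul_le_mul_of_nonneg_right hs1 hfp]
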